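/- Let L be a first-order language, let A and B be L-structures with A a substructure of B, and let K be a class of L-structures with A, B ∈ K such that K is closed under ultraproducts. Then the following are equivalent: (1) A is an epic substructure of B in K; (2) for every b ∈ B there exist a primitive positive formula φ(x₁,…,xₙ,y) that defines a function in K and elements a₁,…,aₙ ∈ A such that [φ]^B(ā) = b (i.e., b is the unique element of B with B ⊨ φ(ā,b)). -/

import Mathlib

open FirstOrder FirstOrder.Language

universe u v w

namespace Epic

variable {L : FirstOrder.Language.{u, v}}

/-- A finite conjunction of atomic formulas. -/
inductive IsConjAtomic {α : Type w} : ∀ {n : ℕ}, L.BoundedFormula α n → Prop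
  | of_isAtomic {n : ℕ} {φ : L.BoundedFormula α n} : φ.IsAtomic → IsConjAtomic φ
  | inf {n : ℕ} {φ ψ : L.BoundedFormula α n} :
      IsConjAtomic φ → IsConjAtomic ψ → IsConjAtomic (φ ⊓ ψ)

/-- A primitive positive formula: a block of existential quantifiers in front of a
finite conjunction of atomic formulas. -/
inductive IsPP {α : Type w} : ∀ {n : ℕ}, L.BoundedFormula α n → Prop
  | of_conj {n : ℕ} {φ : L.BoundedFormula α n} : IsConjAtomic φ → IsPP φ
  | ex {n : ℕ} {φ : L.BoundedFormula α (n + 1)} : IsPP φ → IsPP φ.ex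

variable (L) in
/-- A class of `L`-structures with universes in `Type u`. -/
def StrClass := ∀ (M : Type u) [L.Structure M], Prop

/-- The formula `φ(x₁,…,xₙ,y)` defines a (partial) function in the class `K`:
`K ⊨ ∀ x̄ y z, φ(x̄,y) ∧ φ(x̄,z) → y = z`. -/
def DefinesFn (K : StrClass L) {n : ℕ} (φ : L.Formula (Fin (n + 1))) : Prop :=
  ∀ (C : Type u) [L.Structure C], K C → ∀ (v : Fin n → C) (y z : C),
    φ.Realize (Fin.snoc v y) → φ.Realize (Fin.snoc v z) → y = z

/-- `A` is an epic substructure of `B` in the class `K`: any two homomorphisms from `B`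
into a member of `K` agreeing on `A` are equal. -/
def IsEpicSubstructure (K : StrClass L) {B : Type u} [L.Structure B]
    (A : L.Substructure B) : Prop :=
  ∀ (C : Type u) [L.Structure C], K C → ∀ g g' : B →[L] C,
    (∀ a ∈ A, g a = g' a) → g = g'

/-- `h` is a `K`-epimorphism: it is right-cancellable for homomorphisms into members of `K`. -/
def IsEpi (K : StrClass L) {A B : Type u} [L.Structure A] [L.Structure B]
    (h : A →[L] B) : Prop :=
  ∀ (C : Type u) [L.Structure C], K C → ∀ g g' : B →[L] C,
    g.comp h = g'.comp h → g = g'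

/-! ### Preservation of primitive positive formulas under homomorphisms -/

theorem IsConjAtomic.realize_hom {M N : Type*} [L.Structure M] [L.Structure N]
    (g : M →[L] N) {α : Type w} {n : ℕ} {φ : L.BoundedFormula α n}
    (h : IsConjAtomic φ) {v : α → M} {xs : Fin n → M}
    (hφ : φ.Realize v xs) : φ.Realize (g ∘ v) (g ∘ xs) := by
  have helim : Sum.elim (g ∘ v) (g ∘ xs) = g ∘ Sum.elim v xs := by
    funext x; cases x <;> rfl
  induction h with
  | of_isAtomic h =>
    cases h with
    | equal t₁ t₂ =>
      rw [BoundedFormula.realize_bdEqual] at hφ ⊢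
      rw [helim, HomClass.realize_term, HomClass.realize_term, hφ]
    | rel R ts =>
      rw [BoundedFormula.realize_rel] at hφ ⊢
      rw [helim]
      simp only [HomClass.realize_term]
      exact g.map_rel R _ hφ
  | inf h1 h2 ih1 ih2 =>
    rw [BoundedFormula.realize_inf] at hφ ⊢
    exact ⟨ih1 hφ.1, ih2 hφ.2⟩

theorem IsPP.realize_hom {M N : Type*} [L.Structure M] [L.Structure N]
    (g : M →[L] N) {α : Type w} {n : ℕ} {φ : L.BoundedFormula α n}
    (h : IsPP φ) {v : α → M} {xs : Fin n → M}
    (hφ : φ.Realize v xs) : φ.Realize (g ∘ v) (g ∘ xs) := by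
  induction h with
  | of_conj h => exact h.realize_hom g hφ
  | ex h ih =>
    rw [BoundedFormula.realize_ex] at hφ ⊢
    obtain ⟨a, ha⟩ := hφ
    refine ⟨g a, ?_⟩
    have := ih ha
    rwa [Fin.comp_snoc] at this

theorem IsPP.realize_formula_hom {M N : Type*} [L.Structure M] [L.Structure N]
    {α : Type w} {φ : L.Formula α} (h : IsPP φ) (g : M →[L] N) {v : α → M}
    (hv : φ.Realize v) : φ.Realize (g ∘ v) := by
  have := h.realize_hom g (xs := default) hv
  rwa [Subsingleton.elim (g ∘ (default : Fin 0 → M)) (default : Fin 0 → N)] at this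

/-! ### Syntactic lemmas -/

theorem IsConjAtomic.relabel {α : Type w} {β : Type*} {m k : ℕ} {χ : L.BoundedFormula α k}
    (h : IsConjAtomic χ) (ρ : α → β ⊕ Fin m) : IsConjAtomic (χ.relabel ρ) := by
  induction h with
  | of_isAtomic h => exact .of_isAtomic (h.relabel ρ)
  | inf h1 h2 ih1 ih2 => exact .inf ih1 ih2

theorem IsPP.exs {α : Type w} : ∀ {k : ℕ} {χ : L.BoundedFormula α k},
    IsPP χ → IsPP χ.exs := by
  intro k
  induction k with
  | zero => intro χ h; exact h
  | succ k ih => intro χ h; exact ih h.ex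

theorem realize_formula_relabel {M : Type*} [L.Structure M] {α β : Type*} {m : ℕ}
    (φ : L.Formula α) (ρ : α → β ⊕ Fin m) (v : β → M) (xs : Fin m → M) :
    (BoundedFormula.relabel ρ (φ : L.BoundedFormula α 0)).Realize v xs ↔
      φ.Realize (Sum.elim v xs ∘ ρ) := by
  rw [BoundedFormula.realize_relabel]
  have h1 : xs ∘ Fin.castAdd 0 = xs := funext fun i => congrArg xs (Fin.ext rfl)
  have h2 : xs ∘ Fin.natAdd m = (default : Fin 0 → M) := funext fun i => i.elim0
  rw [h1, h2]
  rfl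

theorem realize_foldr_inf {M : Type*} [L.Structure M] {α : Type*}
    (l : List (L.Formula α)) (base : L.Formula α) (v : α → M) :
    ((l.foldr (· ⊓ ·) base).Realize v) ↔ (∀ φ ∈ l, φ.Realize v) ∧ base.Realize v := by
  induction l with
  | nil => simp
  | cons t l ih => simp [Formula.realize_inf, ih, and_assoc]

theorem isConjAtomic_foldr_inf {α : Type*} (l : List (L.Formula α)) (base : L.Formula α)
    (hl : ∀ φ ∈ l, BoundedFormula.IsAtomic φ) (hbase : BoundedFormula.IsAtomic base) :
    IsConjAtomic (l.foldr (· ⊓ ·) base) := by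
  induction l with
  | nil => exact .of_isAtomic hbase
  | cons t l ih =>
    exact .inf (.of_isAtomic (hl t List.mem_cons_self))
      (ih fun φ hφ => hl φ (List.mem_cons_of_mem t hφ))

/-! ### Atomic facts about two glued copies of a structure -/

open FirstOrder.Language.Structure

/-- Atomic facts about two copies of `B`, glued along a substructure. -/
inductive Fact (L : FirstOrder.Language.{u, v}) (B : Type u) : Type (max u v)
  | func {k : ℕ} (f : L.Functions k) (x : Fin k → B) (s : Bool)
  | rel {k : ℕ} (R : L.Relations k) (x : Fin k → B) (s : Bool)
  | glue (a : B)

/-- Embed an element of `B` into the left (`true`) or right (`false`) copy of `B ⊕ B`. -/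
def emb {B : Type u} : Bool → B → B ⊕ B
  | true, x => Sum.inl x
  | false, x => Sum.inr x

theorem emb_elim' {B : Type u} (s : Bool) (x : B) : Sum.elim id id (emb s x) = x := by
  cases s <;> rfl

variable {B : Type u} [L.Structure B]

/-- The fact holds under an assignment of the two copies of `B` into `C`. -/
def Fact.holds {C : Type*} [L.Structure C] (t : Fact L B) (v : B ⊕ B → C) : Prop :=
  match t with
  | .func f x s => funMap f (fun i => v (emb s (x i))) = v (emb s (funMap f x))
  | .rel R x s => RelMap R (fun i => v (emb s (x i)))
  | .glue a => v (Sum.inl a) = v (Sum.inr a)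

/-- The fact is true in `B` (with glue restricted to the substructure `A`). -/
def Fact.valid (A : L.Substructure B) : Fact L B → Prop
  | .func _ _ _ => True
  | .rel R x _ => RelMap R x
  | .glue a => a ∈ A

/-- The fact as an atomic formula with free variables in the two copies of `B`. -/
def Fact.toFormula : Fact L B → L.Formula (B ⊕ B)
  | .func f x s => Term.equal (Term.func f (fun i => Term.var (emb s (x i))))
      (Term.var (emb s (funMap f x)))
  | .rel R x s => Relations.formula R (fun i => Term.var (emb s (x i)))
  | .glue a => Term.equal (Term.var (Sum.inl a)) (Term.var (Sum.inr a))

theorem Fact.isAtomic_toFormula (t : Fact L B) : BoundedFormula.IsAtomic t.toFormula := by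
  cases t with
  | func f x s => exact BoundedFormula.IsAtomic.equal _ _
  | rel R x s => exact BoundedFormula.IsAtomic.rel _ _
  | glue a => exact BoundedFormula.IsAtomic.equal _ _

theorem Fact.realize_toFormula {C : Type*} [L.Structure C] (t : Fact L B) (v : B ⊕ B → C) :
    t.toFormula.Realize v ↔ t.holds v := by
  cases t with
  | func f x s => simp [toFormula, holds, Formula.realize_equal, Term.realize]
  | rel R x s => simp [toFormula, holds, Formula.realize_rel, Term.realize]
  | glue a => simp [toFormula, holds, Formula.realize_equal, Term.realize]

/-- The elements of `B` mentioned by a fact. -/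
def Fact.vars : Fact L B → List B
  | .func f x _ => funMap f x :: List.ofFn x
  | .rel _ x _ => List.ofFn x
  | .glue a => [a]

theorem Fact.holds_collapse (A : L.Substructure B) (t : Fact L B) (ht : t.valid A) :
    t.holds (Sum.elim id id : B ⊕ B → B) := by
  cases t with
  | func f x s =>
    show funMap f (fun i => Sum.elim id id (emb s (x i))) = Sum.elim id id (emb s (funMap f x))
    simp only [emb_elim']
  | rel R x s =>
    show RelMap R (fun i => Sum.elim id id (emb s (x i)))
    have ht' : RelMap R x := ht
    simp only [emb_elim']
    exact ht'
  | glue a => rfl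

theorem Fact.holds_congr {C : Type*} [L.Structure C] {v v' : B ⊕ B → C} (t : Fact L B)
    (h : ∀ y ∈ t.vars, ∀ s, v (emb s y) = v' (emb s y)) : t.holds v ↔ t.holds v' := by
  cases t with
  | func f x s =>
    show (funMap f (fun i => v (emb s (x i))) = v (emb s (funMap f x))) ↔
      (funMap f (fun i => v' (emb s (x i))) = v' (emb s (funMap f x)))
    have h1 : (fun i => v (emb s (x i))) = fun i => v' (emb s (x i)) := by
      funext i
      exact h (x i) (by simp only [vars, List.mem_cons, List.mem_ofFn]; exact Or.inr ⟨i, rfl⟩) s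
    have h2 : v (emb s (funMap f x)) = v' (emb s (funMap f x)) :=
      h _ (by simp [vars]) s
    rw [h1, h2]
  | rel R x s =>
    show RelMap R (fun i => v (emb s (x i))) ↔ RelMap R (fun i => v' (emb s (x i)))
    have h1 : (fun i => v (emb s (x i))) = fun i => v' (emb s (x i)) := by
      funext i
      exact h (x i) (by simp only [vars, List.mem_ofFn]; exact ⟨i, rfl⟩) s
    rw [h1]
  | glue a =>
    show (v (Sum.inl a) = v (Sum.inr a)) ↔ (v' (Sum.inl a) = v' (Sum.inr a))
    have h1 := h a (by simp [vars]) true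
    have h2 := h a (by simp [vars]) false
    rw [show emb true a = Sum.inl a from rfl] at h1
    rw [show emb false a = Sum.inr a from rfl] at h2
    rw [h1, h2]

/-! ### The relabeling construction -/

/-- The index of a member of a list, chosen by choice. -/
noncomputable def idxOf {α : Type*} (l : List α) (a : α) (h : a ∈ l) : Fin l.length :=
  (List.mem_iff_get.1 h).choose

theorem idxOf_congr {α : Type*} {l : List α} {a a' : α} (h : a = a') (ha : a ∈ l)
    (ha' : a' ∈ l) : idxOf l a ha = idxOf l a' ha' := by subst h; rfl

theorem get_idxOf {α : Type*} (l : List α) (a : α) (h : a ∈ l) :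
    l.get (idxOf l a h) = a :=
  (List.mem_iff_get.1 h).choose_spec

section Construction

variable (A : L.Substructure B) (b : B) (l : List (Fact L B))

/-- All elements of `B` occurring in the list of facts, together with `b`. -/
def xsL : List B := b :: l.flatMap Fact.vars

open scoped Classical in
/-- The parameters: elements of `A` occurring in the facts. -/
noncomputable def xsAL : List A :=
  (xsL b l).filterMap fun x => if h : x ∈ A then some ⟨x, h⟩ else none

/-- The existentially quantified variable slots. -/
def EL : List (B ⊕ B) := (xsL b l).map Sum.inl ++ (xsL b l).map Sum.inr

/-- Relabeling of the doubled variables into parameters, output variable and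
existential slots. -/
noncomputable def rho : B ⊕ B → Fin ((xsAL A b l).length + 1) ⊕ Fin (EL b l).length :=
  fun w =>
  @dite _ (Sum.elim id id w = b) (Classical.propDecidable _)
    (fun _ => Sum.inl (Fin.last (xsAL A b l).length))
    (fun _ =>
      @dite _ (Sum.elim id id w ∈ A) (Classical.propDecidable _)
        (fun h =>
          @dite _ ((⟨Sum.elim id id w, h⟩ : A) ∈ xsAL A b l) (Classical.propDecidable _)
            (fun hmem =>
              Sum.inl (Fin.castSucc (idxOf (xsAL A b l) ⟨Sum.elim id id w, h⟩ hmem)))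
            (fun _ => Sum.inl (Fin.last (xsAL A b l).length)))
        (fun _ =>
          @dite _ (w ∈ EL b l) (Classical.propDecidable _)
            (fun hw => Sum.inr (idxOf (EL b l) w hw))
            (fun _ => Sum.inl (Fin.last (xsAL A b l).length))))

theorem rho_b (s : Bool) : rho A b l (emb s b) = Sum.inl (Fin.last _) := by
  unfold rho
  rw [dif_pos (emb_elim' s b)]

theorem rho_A {x : B} (hx : x ∈ xsL b l) (h : x ∈ A) (hb : b ∉ A) :
    ∃ i : Fin (xsAL A b l).length, (∀ s, rho A b l (emb s x) = Sum.inl i.castSucc) ∧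
      (xsAL A b l).get i = ⟨x, h⟩ := by
  classical
  have hxb : x ≠ b := fun e => hb (e ▸ h)
  have hmem : (⟨x, h⟩ : A) ∈ xsAL A b l := by
    unfold xsAL
    refine List.mem_filterMap.2 ⟨x, hx, ?_⟩
    rw [dif_pos h]
  refine ⟨idxOf _ _ hmem, fun s => ?_, get_idxOf _ _ hmem⟩
  unfold rho
  rw [dif_neg (by rw [emb_elim']; exact hxb)]
  have h' : Sum.elim id id (emb s x) ∈ A := by rw [emb_elim']; exact h
  rw [dif_pos h']
  have hmem' : (⟨Sum.elim id id (emb s x), h'⟩ : A) ∈ xsAL A b l := by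
    convert hmem using 2 <;> rw [emb_elim']
  rw [dif_pos hmem']
  have heq : (⟨Sum.elim id id (emb s x), h'⟩ : A) = ⟨x, h⟩ := by
    ext; exact emb_elim' s x
  rw [idxOf_congr heq hmem' hmem]

theorem mem_EL {x : B} (hx : x ∈ xsL b l) (s : Bool) : emb s x ∈ EL b l := by
  cases s
  · exact List.mem_append_right _ (List.mem_map_of_mem (f := Sum.inr) hx)
  · exact List.mem_append_left _ (List.mem_map_of_mem (f := Sum.inl) hx)

theorem rho_other {x : B} (hxb : x ≠ b) (h : x ∉ A) (s : Bool) (hw : emb s x ∈ EL b l) :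
    ∃ j : Fin (EL b l).length, rho A b l (emb s x) = Sum.inr j ∧
      (EL b l).get j = emb s x := by
  classical
  refine ⟨idxOf _ _ hw, ?_, get_idxOf _ _ hw⟩
  unfold rho
  rw [dif_neg (by rw [emb_elim']; exact hxb)]
  rw [dif_neg (by rw [emb_elim']; exact h)]
  rw [dif_pos hw]

/-- The conjunction of all the facts in `l`, relabeled and existentially quantified. -/
noncomputable def bigFormula : L.Formula (Fin ((xsAL A b l).length + 1)) :=
  (BoundedFormula.relabel (rho A b l)
    (((l.map Fact.toFormula).foldr (· ⊓ ·)
      (Term.equal (Term.var (Sum.inl b)) (Term.var (Sum.inl b)))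
        : L.Formula (B ⊕ B)) : L.BoundedFormula (B ⊕ B) 0)).exs

theorem isPP_bigFormula : IsPP (bigFormula A b l) := by
  refine IsPP.exs (.of_conj (IsConjAtomic.relabel ?_ _))
  refine isConjAtomic_foldr_inf _ _ ?_ (BoundedFormula.IsAtomic.equal _ _)
  intro φ hφ
  obtain ⟨t, _, rfl⟩ := List.mem_map.1 hφ
  exact t.isAtomic_toFormula

theorem realize_bigFormula {M : Type u} [L.Structure M]
    (c : Fin (xsAL A b l).length → M) (y : M) :
    (bigFormula A b l).Realize (Fin.snoc c y) ↔
      ∃ W : Fin (EL b l).length → M, ∀ t ∈ l,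
        t.holds (Sum.elim (Fin.snoc c y) W ∘ rho A b l) := by
  unfold bigFormula
  rw [BoundedFormula.realize_exs]
  constructor
  · rintro ⟨W, hW⟩
    rw [realize_formula_relabel, realize_foldr_inf] at hW
    exact ⟨W, fun t ht => (Fact.realize_toFormula t _).1 (hW.1 _ (List.mem_map_of_mem ht))⟩
  · rintro ⟨W, hW⟩
    refine ⟨W, ?_⟩
    rw [realize_formula_relabel, realize_foldr_inf]
    refine ⟨fun φ hφ => ?_, ?_⟩
    · obtain ⟨t, ht, rfl⟩ := List.mem_map.1 hφ
      exact (Fact.realize_toFormula t _).2 (hW t ht)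
    · simp [Formula.realize_equal, Term.realize]

theorem realize_bigFormula_self (hl : ∀ t ∈ l, t.valid A) (hb : b ∉ A) :
    (bigFormula A b l).Realize
      (Fin.snoc (fun i => (((xsAL A b l).get i : A) : B)) b) := by
  rw [realize_bigFormula]
  refine ⟨fun j => Sum.elim id id ((EL b l).get j), fun t ht => ?_⟩
  have hvars : ∀ y ∈ t.vars, y ∈ xsL b l := fun y hy =>
    List.mem_cons_of_mem _ (List.mem_flatMap.2 ⟨t, ht, hy⟩)
  refine (Fact.holds_congr t ?_).2 (Fact.holds_collapse A t (hl t ht))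
  intro y hy s
  rw [emb_elim']
  have hyxs : y ∈ xsL b l := hvars y hy
  by_cases hyb : y = b
  · rw [hyb]
    show Sum.elim _ _ (rho A b l (emb s b)) = b
    rw [rho_b]
    simp only [Sum.elim_inl, Fin.snoc_last]
  · by_cases hyA : y ∈ A
    · obtain ⟨i, hi, hgt⟩ := rho_A A b l hyxs hyA hb
      show Sum.elim _ _ (rho A b l (emb s y)) = y
      rw [hi s]
      simp only [Sum.elim_inl, Fin.snoc_castSucc, hgt]
    · obtain ⟨j, hj, hgt⟩ := rho_other A b l hyb hyA s (mem_EL b l hyxs s)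
      show Sum.elim _ _ (rho A b l (emb s y)) = y
      rw [hj]
      show Sum.elim id id ((EL b l).get j) = y
      rw [hgt, emb_elim']

end Construction

/-! ### Finite satisfiability -/

theorem finite_sat {L : FirstOrder.Language.{u, u}} (K : StrClass L) {B : Type u}
    [L.Structure B] (A : L.Substructure B) (b : B) (hb : b ∉ A)
    (hcontra : ¬∃ (n : ℕ) (φ : L.Formula (Fin (n + 1))) (a : Fin n → A),
        IsPP φ ∧ DefinesFn K φ ∧ φ.Realize (Fin.snoc (fun i => (a i : B)) b))
    (l : List (Fact L B)) (hl : ∀ t ∈ l, t.valid A) :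
    ∃ (C : Type u) (inst : L.Structure C), @K C inst ∧ ∃ v : B ⊕ B → C,
      (∀ t ∈ l, @Fact.holds L B _ C inst t v) ∧ v (Sum.inl b) ≠ v (Sum.inr b) := by
  have hreal := realize_bigFormula_self A b l hl hb
  have hpp := isPP_bigFormula A b l
  have hnfn : ¬DefinesFn K (bigFormula A b l) := fun hdf =>
    hcontra ⟨_, bigFormula A b l, fun i => (xsAL A b l).get i, hpp, hdf, hreal⟩
  unfold DefinesFn at hnfn
  push_neg at hnfn
  obtain ⟨C, instC, hKC, c, u', z, h1, h2, hne⟩ := hnfn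
  refine ⟨C, instC, hKC, ?_⟩
  letI := instC
  rw [realize_bigFormula] at h1 h2
  obtain ⟨W₁, hW₁⟩ := h1
  obtain ⟨W₂, hW₂⟩ := h2
  refine ⟨Sum.elim (fun x => Sum.elim (Fin.snoc c u') W₁ (rho A b l (Sum.inl x)))
      (fun x => Sum.elim (Fin.snoc c z) W₂ (rho A b l (Sum.inr x))), ?_, ?_⟩
  · intro t ht
    have hvars : ∀ y ∈ t.vars, y ∈ xsL b l := fun y hy =>
      List.mem_cons_of_mem _ (List.mem_flatMap.2 ⟨t, ht, hy⟩)
    cases t with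
    | func f x s =>
      cases s
      · exact hW₂ _ ht
      · exact hW₁ _ ht
    | rel R x s =>
      cases s
      · exact hW₂ _ ht
      · exact hW₁ _ ht
    | glue a =>
      have ha : a ∈ A := hl _ ht
      have haxs : a ∈ xsL b l := hvars a (by simp [Fact.vars])
      obtain ⟨i, hi, -⟩ := rho_A A b l haxs ha hb
      show Sum.elim (Fin.snoc c u') W₁ (rho A b l (Sum.inl a)) =
        Sum.elim (Fin.snoc c z) W₂ (rho A b l (Sum.inr a))
      rw [show rho A b l (Sum.inl a) = Sum.inl i.castSucc from hi true,
        show rho A b l (Sum.inr a) = Sum.inl i.castSucc from hi false]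
      simp only [Sum.elim_inl, Fin.snoc_castSucc]
  · show Sum.elim (Fin.snoc c u') W₁ (rho A b l (Sum.inl b)) ≠
      Sum.elim (Fin.snoc c z) W₂ (rho A b l (Sum.inr b))
    rw [show rho A b l (Sum.inl b) = Sum.inl (Fin.last _) from rho_b A b l true,
      show rho A b l (Sum.inr b) = Sum.inl (Fin.last _) from rho_b A b l false]
    simp only [Sum.elim_inl, Fin.snoc_last]
    exact hne

/-! ### Auxiliary lemma for realizing formulas over ultraproducts -/

theorem bf_realize_irrel {M : Type*} [L.Structure M] {α : Type*} (φ : L.Formula α)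
    (w : α → M) (xs : Fin 0 → M) :
    BoundedFormula.Realize (φ : L.BoundedFormula α 0) w xs ↔ φ.Realize w := by
  unfold Formula.Realize
  rw [Subsingleton.elim xs default]

/-- Theorem: epic substructures are primitive positively generated.
Let `K` be a class of `L`-structures closed under ultraproducts, with `A ≤ B` and
`A, B ∈ K`.  Then `A` is an epic substructure of `B` in `K` iff every `b ∈ B` is the
value at a tuple of elements of `A` of a primitive positive formula defining a
function in `K`. -/
theorem epic_substructure_iff_pp_generated {L : FirstOrder.Language.{u, u}}
    (K : StrClass L)
    (hPu : ∀ (ι : Type u) (U : Ultrafilter ι) (M : ι → Type u) [∀ i, L.Structure (M i)],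
      (∀ i, K (M i)) → K ((U : Filter ι).Product M))
    {B : Type u} [L.Structure B] (A : L.Substructure B) (hA : K A) (hB : K B) :
    IsEpicSubstructure K A ↔
      ∀ b : B, ∃ (n : ℕ) (φ : L.Formula (Fin (n + 1))) (a : Fin n → A),
        IsPP φ ∧ DefinesFn K φ ∧ φ.Realize (Fin.snoc (fun i => (a i : B)) b) := by
  constructor
  · intro hepic b
    by_cases hbA : b ∈ A
    · refine ⟨1, Term.equal (Term.var (Fin.castSucc 0)) (Term.var (Fin.last 1)),
        fun _ => ⟨b, hbA⟩, ?_, ?_, ?_⟩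
      · exact .of_conj (.of_isAtomic (BoundedFormula.IsAtomic.equal _ _))
      · intro C _ _ v y z hy hz
        rw [Formula.realize_equal] at hy hz
        simp only [Term.realize_var, Fin.snoc_castSucc, Fin.snoc_last] at hy hz
        rw [← hy, ← hz]
      · rw [Formula.realize_equal]
        simp only [Term.realize_var, Fin.snoc_castSucc, Fin.snoc_last]
    · by_contra hcon
      classical
      -- the compactness-by-ultraproducts construction
      let I := {S : Finset (Fact L B) // ∀ t ∈ S, t.valid A}
      have hI : ∀ i : I, ∃ (C : Type u) (inst : L.Structure C), @K C inst ∧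
          ∃ v : B ⊕ B → C, (∀ t ∈ i.1, @Fact.holds L B _ C inst t v) ∧
            v (Sum.inl b) ≠ v (Sum.inr b) := by
        intro i
        obtain ⟨C, inst, hKC, v, hv, hne⟩ := finite_sat K A b hbA hcon i.1.toList
          (fun t ht => i.2 t (Finset.mem_toList.1 ht))
        exact ⟨C, inst, hKC, v, fun t ht => hv t (Finset.mem_toList.2 ht), hne⟩
      choose C instC hKC v hv hne using hI
      letI : ∀ i : I, L.Structure (C i) := instC
      let D : I → Set I := fun i => {j | i.1 ⊆ j.1}
      have hD : ∀ i, i ∈ D i := fun i => Finset.Subset.refl i.1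
      have hne' : ∀ i, (Filter.principal (D i)).NeBot := fun i =>
        Filter.principal_neBot_iff.2 ⟨i, hD i⟩
      have hdir : Directed (· ≥ ·) fun i : I => Filter.principal (D i) := by
        intro i j
        refine ⟨⟨i.1 ∪ j.1, fun t ht => ?_⟩, ?_, ?_⟩
        · rcases Finset.mem_union.1 ht with h | h
          exacts [i.2 t h, j.2 t h]
        · refine Filter.principal_mono.2 fun j' hj' => ?_
          exact subset_trans Finset.subset_union_left hj'
        · refine Filter.principal_mono.2 fun j' hj' => ?_
          exact subset_trans Finset.subset_union_right hj'
      haveI : Nonempty I := ⟨⟨∅, by simp⟩⟩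
      have hFne : (⨅ i, Filter.principal (D i)).NeBot :=
        Filter.iInf_neBot_of_directed' hdir hne'
      let U := Ultrafilter.of (⨅ i, Filter.principal (D i))
      have hDU : ∀ i, D i ∈ U := fun i =>
        Filter.le_def.1 (Ultrafilter.of_le _) _
          (Filter.mem_iInf_of_mem i (Filter.mem_principal_self _))
      let Cs := (U : Filter I).Product C
      have hKCs : K Cs := hPu I U C (fun i => hKC i)
      let vstar : B ⊕ B → Cs := fun w => (↑(fun i => v i w) : Cs)
      haveI : ∀ i : I, Nonempty (C i) := fun i => ⟨v i (Sum.inl b)⟩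
      have hkey : ∀ t : Fact L B, t.valid A → t.holds vstar := by
        intro t ht
        rw [← Fact.realize_toFormula]
        have hcast := Ultraproduct.boundedFormula_realize_cast (u := U)
          (φ := (t.toFormula : L.BoundedFormula (B ⊕ B) 0))
          (x := fun w i => v i w) (v := fun (_ : Fin 0) i => v i (Sum.inl b))
        have hev : ∀ᶠ i in (U : Filter I),
            BoundedFormula.Realize (t.toFormula : L.BoundedFormula (B ⊕ B) 0)
              (fun w => v i w) (fun _ : Fin 0 => v i (Sum.inl b)) := by
          refine Filter.mem_of_superset (hDU ⟨{t}, fun t' ht' => ?_⟩) fun i hi => ?_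
          · rw [Finset.mem_singleton] at ht'
            subst ht'
            exact ht
          · refine (bf_realize_irrel _ _ _).2 ?_
            refine (Fact.realize_toFormula t _).2 ?_
            exact hv i t (Finset.singleton_subset_iff.1 hi)
        have := hcast.2 hev
        exact (bf_realize_irrel _ _ _).1 this
      have hneq : vstar (Sum.inl b) ≠ vstar (Sum.inr b) := by
        intro heq
        have hev : ∀ᶠ i in (U : Filter I), v i (Sum.inl b) = v i (Sum.inr b) :=
          Quotient.exact' heq
        obtain ⟨i, hi⟩ := hev.exists
        exact hne i hi
      let g : B →[L] Cs :=
        ⟨fun x => vstar (Sum.inl x),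
          fun {k} f x => (hkey (.func f x true) trivial).symm,
          fun {k} R x hR => hkey (.rel R x true) hR⟩
      let g' : B →[L] Cs :=
        ⟨fun x => vstar (Sum.inr x),
          fun {k} f x => (hkey (.func f x false) trivial).symm,
          fun {k} R x hR => hkey (.rel R x false) hR⟩
      have hgg' : g = g' := hepic Cs hKCs g g' (fun a ha => hkey (.glue a) ha)
      exact hneq (DFunLike.congr_fun hgg' b)
  · intro h2 C instC hKC g g' hag
    refine DFunLike.ext g g' fun x => ?_
    obtain ⟨n, φ, a, hPP, hfn, hreal⟩ := h2 x
    have hC1 : φ.Realize (g ∘ Fin.snoc (fun i => ((a i : A) : B)) x) :=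
      hPP.realize_formula_hom g hreal
    have hC2 : φ.Realize (g' ∘ Fin.snoc (fun i => ((a i : A) : B)) x) :=
      hPP.realize_formula_hom g' hreal
    rw [Fin.comp_snoc] at hC1 hC2
    have hparams : (g' ∘ fun i => ((a i : A) : B)) = (g ∘ fun i => ((a i : A) : B)) := by
      funext i
      exact (hag _ (a i).2).symm
    rw [hparams] at hC2
    exact hfn C hKC _ _ _ hC1 hC2

end Epic
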